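/- For all r, s ∈ ℕ with r, s ≥ 1 and every x ∈ ℚ, the formal power series identity (2/(t+2))^s (log(1+t)/t)^r (1+t)^x = Σ_{n≥0} (Σ_{m=0}^{n} BE_m^{(r,s)}(x) · S_1(n,m)) t^n/n! holds, where BE_m^{(r,s)}(x) are the Bernoulli–Euler mixed-type polynomials of order (r,s) and S_1(n,m) are the signed Stirling numbers of the first kind; that is, substituting log(1+t) for t in the generating function of the BE polynomials yields the stated series. -/

import Mathlib

/-- `log(1+t) = ∑_{n ≥ 1} (-1)^{n+1} t^n / n` as a formal power series over `ℚ`. -/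
noncomputable def logOneAdd : PowerSeries ℚ :=
  PowerSeries.mk fun n => if n = 0 then 0 else (-1 : ℚ) ^ (n + 1) / n

/-- `e^{xt} = ∑_{n ≥ 0} x^n t^n / n!` as a formal power series over `ℚ`. -/
noncomputable def expMul (x : ℚ) : PowerSeries ℚ :=
  PowerSeries.mk fun n => x ^ n / (n.factorial : ℚ)

/-- Formal composition `f(g(t))` of power series, intended for `g` with zero
constant term (then `coeff n (g^m) = 0` for `m > n`, so the sum below is the
full composition). -/
noncomputable def psComp (f g : PowerSeries ℚ) : PowerSeries ℚ :=
  PowerSeries.mk fun n =>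
    ∑ m ∈ Finset.range (n + 1),
      PowerSeries.coeff m f * PowerSeries.coeff n (g ^ m)

/-- `(1+t)^x := exp (x · log(1+t))` as a formal power series over `ℚ`. -/
noncomputable def onePlusPow (x : ℚ) : PowerSeries ℚ :=
  psComp (PowerSeries.exp ℚ) (x • logOneAdd)

/-- The falling factorial `(x)_n = x (x-1) ⋯ (x-n+1)`. -/
def fallFact (x : ℚ) (n : ℕ) : ℚ := ∏ i ∈ Finset.range n, (x - (i : ℚ))


section Aux
open PowerSeries Finset

lemma constCoeff_L : constantCoeff logOneAdd = 0 := by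
  rw [← coeff_zero_eq_constantCoeff_apply, logOneAdd, coeff_mk]
  simp

lemma coeff_L_pow_zero {i m : ℕ} (h : m < i) : coeff m (logOneAdd ^ i) = 0 := by
  have hx : (X : ℚ⟦X⟧) ^ i ∣ logOneAdd ^ i :=
    pow_dvd_pow_of_dvd (X_dvd_iff.mpr constCoeff_L) i
  exact (X_pow_dvd_iff.mp hx) m h

lemma coeff_psComp (f : ℚ⟦X⟧) (n : ℕ) :
    coeff n (psComp f logOneAdd) =
      ∑ m ∈ range (n + 1), coeff m f * coeff n (logOneAdd ^ m) := by
  rw [psComp, coeff_mk]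

noncomputable def Ehom : Polynomial ℚ →+* ℚ⟦X⟧ :=
  Polynomial.eval₂RingHom C logOneAdd

lemma coeff_Ehom (P : Polynomial ℚ) (m : ℕ) :
    coeff m (Ehom P) =
      ∑ i ∈ range (m + 1), P.coeff i * coeff m (logOneAdd ^ i) := by
  set N := max (P.natDegree + 1) (m + 1) with hN
  have hd : P.natDegree < N := lt_of_lt_of_le (Nat.lt_succ_self _) (le_max_left _ _)
  have h1 : Ehom P = ∑ i ∈ range N, C (P.coeff i) * logOneAdd ^ i := by
    rw [Ehom, Polynomial.coe_eval₂RingHom, Polynomial.eval₂_eq_sum_range' _ hd]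
  rw [h1, map_sum]
  have h2 : ∀ i ∈ range N, coeff m (C (P.coeff i) * logOneAdd ^ i)
      = P.coeff i * coeff m (logOneAdd ^ i) := by
    intro i _; rw [coeff_C_mul]
  rw [sum_congr rfl h2]
  refine (sum_subset (range_subset_range.mpr (le_max_right _ _)) ?_).symm
  intro i _ hi
  rw [mem_range, not_lt] at hi
  rw [coeff_L_pow_zero (lt_of_lt_of_le (Nat.lt_succ_self m) hi), mul_zero]

lemma coeff_Ehom_trunc (f : ℚ⟦X⟧) {n N : ℕ} (h : n < N) :
    coeff n (Ehom (trunc N f)) = coeff n (psComp f logOneAdd) := by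
  rw [coeff_Ehom, coeff_psComp]
  refine sum_congr rfl fun i hi => ?_
  rw [mem_range] at hi
  rw [coeff_trunc, if_pos (lt_of_lt_of_le hi h)]

lemma psComp_mul (f g : ℚ⟦X⟧) :
    psComp (f * g) logOneAdd = psComp f logOneAdd * psComp g logOneAdd := by
  ext n
  rw [coeff_psComp]
  have h1 : ∀ i ∈ range (n + 1),
      coeff i (f * g) * coeff n (logOneAdd ^ i)
        = (trunc (n+1) f * trunc (n+1) g).coeff i * coeff n (logOneAdd ^ i) := by
    intro i hi
    rw [mem_range] at hi
    rw [coeff_mul_eq_coeff_trunc_mul_trunc f g hi, ← Polynomial.coe_mul,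
      Polynomial.coeff_coe]
  rw [sum_congr rfl h1, ← coeff_Ehom, map_mul, coeff_mul, coeff_mul]
  refine sum_congr rfl fun p hp => ?_
  rw [HasAntidiagonal.mem_antidiagonal] at hp
  rw [coeff_Ehom_trunc f (Nat.lt_succ_of_le (le_trans (Nat.le_add_right _ _) hp.le)),
    coeff_Ehom_trunc g (Nat.lt_succ_of_le (le_trans (Nat.le_add_left _ _) hp.le))]

lemma psComp_one : psComp 1 logOneAdd = 1 := by
  ext n
  rw [coeff_psComp]
  rw [sum_eq_single 0 (fun m _ hm => by rw [coeff_one, if_neg hm, zero_mul])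
    (fun h => absurd (mem_range.mpr n.succ_pos) h)]
  rw [coeff_one, if_pos rfl, one_mul, pow_zero]

lemma psComp_add (f g : ℚ⟦X⟧) :
    psComp (f + g) logOneAdd = psComp f logOneAdd + psComp g logOneAdd := by
  ext n
  rw [map_add, coeff_psComp, coeff_psComp, coeff_psComp, ← sum_add_distrib]
  exact sum_congr rfl fun i _ => by rw [map_add, add_mul]

/-- Substitution of `logOneAdd` as a ring homomorphism. -/
noncomputable def Phi : ℚ⟦X⟧ →+* ℚ⟦X⟧ where
  toFun f := psComp f logOneAdd
  map_one' := psComp_one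
  map_mul' := psComp_mul
  map_zero' := by
    ext n; rw [coeff_psComp]
    simp
  map_add' := psComp_add

lemma Phi_apply (f : ℚ⟦X⟧) : Phi f = psComp f logOneAdd := rfl

lemma Phi_X : Phi X = logOneAdd := by
  ext n
  rw [Phi_apply, coeff_psComp]
  rcases n with _ | k
  · simp [coeff_L_pow_zero, logOneAdd]
  · rw [sum_eq_single 1 (fun m _ hm => by rw [coeff_X, if_neg hm, zero_mul])
      (fun h => absurd (mem_range.mpr (by omega)) h)]
    rw [coeff_X, if_pos rfl, one_mul, pow_one]


lemma coeff_dL (n : ℕ) : coeff n (d⁄dX ℚ logOneAdd) = (-1 : ℚ) ^ n := by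
  rw [coeff_derivative, logOneAdd, coeff_mk, if_neg (Nat.succ_ne_zero n)]
  have h : ((n : ℚ) + 1) ≠ 0 := by positivity
  push_cast
  field_simp
  ring

lemma one_add_X_mul_dL : ((1 : ℚ⟦X⟧) + X) * d⁄dX ℚ logOneAdd = 1 := by
  ext n
  rw [add_mul, one_mul, map_add]
  rcases n with _ | k
  · rw [coeff_dL]
    simp [coeff_zero_eq_constantCoeff]
  · rw [coeff_succ_X_mul, coeff_dL, coeff_dL, coeff_one, if_neg (Nat.succ_ne_zero k)]
    ring

lemma coeff_exp_q (m : ℕ) : coeff m (PowerSeries.exp ℚ) = 1 / m.factorial := by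
  rw [coeff_exp, Algebra.algebraMap_self, RingHom.id_apply]

lemma key_pow (n m : ℕ) : coeff (n + 1) (logOneAdd ^ m) * (n + 1)
    = (m : ℚ) * coeff n (logOneAdd ^ (m - 1) * d⁄dX ℚ logOneAdd) := by
  rw [← coeff_derivative, Derivation.leibniz_pow, smul_eq_mul, map_nsmul, nsmul_eq_mul]

lemma rhs_eq (n : ℕ) :
    coeff n (psComp (PowerSeries.exp ℚ) logOneAdd * d⁄dX ℚ logOneAdd)
      = ∑ k ∈ range (n + 1), coeff k (PowerSeries.exp ℚ) *
          coeff n (logOneAdd ^ k * d⁄dX ℚ logOneAdd) := by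
  rw [coeff_mul]
  have h1 : ∀ p ∈ antidiagonal n,
      coeff p.1 (psComp (PowerSeries.exp ℚ) logOneAdd) * coeff p.2 (d⁄dX ℚ logOneAdd)
        = ∑ k ∈ range (n + 1), coeff k (PowerSeries.exp ℚ) *
            (coeff p.1 (logOneAdd ^ k) * coeff p.2 (d⁄dX ℚ logOneAdd)) := by
    intro p hp
    rw [HasAntidiagonal.mem_antidiagonal] at hp
    rw [coeff_psComp, sum_mul,
      ← sum_subset (range_subset_range.mpr (by omega : p.1 + 1 ≤ n + 1))
        (fun k _ hk => by
          rw [mem_range, not_lt] at hk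
          rw [coeff_L_pow_zero (by omega), zero_mul, mul_zero])]
    exact sum_congr rfl fun k _ => by ring
  rw [sum_congr rfl h1, sum_comm]
  refine sum_congr rfl fun k _ => ?_
  rw [← mul_sum, coeff_mul]

lemma chain_exp :
    d⁄dX ℚ (psComp (PowerSeries.exp ℚ) logOneAdd)
      = psComp (PowerSeries.exp ℚ) logOneAdd * d⁄dX ℚ logOneAdd := by
  ext n
  rw [coeff_derivative, coeff_psComp, sum_mul, rhs_eq, sum_range_succ']
  have h0 : coeff 0 (PowerSeries.exp ℚ) * coeff (n + 1) (logOneAdd ^ 0) * (n + 1 : ℚ)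
      = 0 := by
    rw [pow_zero, coeff_one, if_neg (Nat.succ_ne_zero n)]
    ring
  rw [h0, add_zero]
  refine sum_congr rfl fun k _ => ?_
  rw [mul_assoc, key_pow, Nat.add_sub_cancel, coeff_exp_q, coeff_exp_q, Nat.factorial_succ]
  have hk : ((k.factorial : ℚ)) ≠ 0 := Nat.cast_ne_zero.mpr k.factorial_ne_zero
  have hk1 : ((k : ℚ) + 1) ≠ 0 := by positivity
  push_cast
  field_simp

lemma comp_exp : psComp (PowerSeries.exp ℚ) logOneAdd = 1 + X := by
  set F := psComp (PowerSeries.exp ℚ) logOneAdd with hF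
  have hode : (1 + X) * d⁄dX ℚ F = F := by
    rw [chain_exp, show (1 + X) * (F * d⁄dX ℚ logOneAdd)
        = F * ((1 + X) * d⁄dX ℚ logOneAdd) by ring, one_add_X_mul_dL, mul_one]
  have hrec : ∀ n : ℕ, coeff (n + 1) F * ((n : ℚ) + 1) + (n : ℚ) * coeff n F
      = coeff n F := by
    intro n
    have h := congrArg (coeff n) hode
    rw [add_mul, one_mul, map_add, coeff_derivative] at h
    rcases n with _ | k
    · rw [show coeff 0 ((X : ℚ⟦X⟧) * d⁄dX ℚ F) = 0 by
        rw [coeff_zero_eq_constantCoeff, map_mul, constantCoeff_X, zero_mul]] at h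
      push_cast
      rw [zero_mul, add_zero]
      simpa using h
    · rw [coeff_succ_X_mul, coeff_derivative] at h
      push_cast
      rw [show ((k : ℚ) + 1) * coeff (k + 1) F = coeff (k + 1) F * ((k : ℚ) + 1) by ring]
      convert h using 2
      push_cast; ring
  have a0 : coeff 0 F = 1 := by
    rw [hF, coeff_psComp]
    simp [coeff_exp_q]
  have a1 : coeff 1 F = 1 := by
    rw [hF, coeff_psComp, Finset.sum_range_succ, Finset.sum_range_one]
    simp [coeff_exp_q, logOneAdd, coeff_mk]
  have azero : ∀ k : ℕ, coeff (k + 2) F = 0 := by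
    intro k
    induction k with
    | zero =>
      have h := hrec 1
      rw [a1] at h
      push_cast at h
      have : coeff 2 F * 2 = 0 := by linarith
      linarith
    | succ m ih =>
      have h := hrec (m + 2)
      rw [ih, mul_zero, add_zero] at h
      have h3 : (((m + 2 : ℕ) : ℚ) + 1) ≠ 0 := by positivity
      rcases mul_eq_zero.mp h with h4 | h4
      · exact h4
      · exact absurd h4 h3
  ext n
  rcases n with _ | _ | k
  · rw [a0]; simp
  · rw [a1]; simp
  · rw [azero k, map_add, coeff_one, coeff_X, if_neg (by omega), if_neg (by omega), add_zero]


lemma comp_expMul (x : ℚ) : psComp (expMul x) logOneAdd = onePlusPow x := by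
  ext n
  rw [coeff_psComp, onePlusPow, psComp, coeff_mk]
  refine sum_congr rfl fun m _ => ?_
  rw [smul_pow, map_smul, smul_eq_mul, expMul, coeff_mk, coeff_exp_q]
  ring

end Aux

theorem BE_log_substitution_series
    (r s : ℕ) (hr : 1 ≤ r) (hs : 1 ≤ s) (x : ℚ)
    (BE : ℕ → ℚ) (S1 : ℕ → ℕ → ℚ)
    (hBE : (2 : PowerSeries ℚ) ^ s * PowerSeries.X ^ r * expMul x =
      (PowerSeries.exp ℚ + 1) ^ s * (PowerSeries.exp ℚ - 1) ^ r * (PowerSeries.mk fun k => BE k / (k.factorial : ℚ)))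
    (hS1 : ∀ m, logOneAdd ^ m =
      (m.factorial : ℚ) • (PowerSeries.mk fun k => S1 k m / (k.factorial : ℚ))) :
    (2 : PowerSeries ℚ) ^ s * logOneAdd ^ r * onePlusPow x =
      (PowerSeries.X + 2) ^ s * PowerSeries.X ^ r *
        (PowerSeries.mk fun n =>
          (∑ m ∈ Finset.range (n + 1), BE m * S1 n m) / (n.factorial : ℚ)) := by
  classical
  have hfac : ∀ m : ℕ, ((m.factorial : ℚ)) ≠ 0 :=
    fun m => Nat.cast_ne_zero.mpr m.factorial_ne_zero
  have comp_BE : psComp (PowerSeries.mk fun k => BE k / (k.factorial : ℚ)) logOneAdd =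
      PowerSeries.mk fun n =>
        (∑ m ∈ Finset.range (n + 1), BE m * S1 n m) / (n.factorial : ℚ) := by
    ext n
    rw [coeff_psComp, PowerSeries.coeff_mk, Finset.sum_div]
    refine Finset.sum_congr rfl fun m _ => ?_
    rw [PowerSeries.coeff_mk, hS1 m, map_smul, smul_eq_mul, PowerSeries.coeff_mk]
    field_simp
  have h := congrArg Phi hBE
  simp only [map_mul, map_pow, map_ofNat, map_add, map_sub, map_one] at h
  rw [Phi_X] at h
  simp only [Phi_apply] at h
  rw [comp_expMul, comp_exp, comp_BE] at h
  rw [show ((1 : PowerSeries ℚ) + PowerSeries.X + 1) = PowerSeries.X + 2 by ring,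
    show ((1 : PowerSeries ℚ) + PowerSeries.X - 1) = PowerSeries.X by ring] at h
  exact h
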